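/- The reduced evolution system extracted from the conformal Einstein field equations and the structure equations in Stewart's gauge — namely D_0 Σ = B_0(Σ,Γ,s)Σ for the derivatives of the conformal factor, D_1 e = B_1(Γ,e)e for the frame components, D_2 Γ = B_2(Γ,φ,Φ)Γ for the spin connection coefficients, D_3 Φ = B_3 Φ for the trace-free Ricci components, and D_4 φ = B_4 φ for the rescaled Weyl components — is symmetric hyperbolic with respect to the direction τ^a = l^a + n^a: writing D_3 = A_3^μ ∂_μ and D_4 = A_4^μ ∂_μ, the matrices A_3^μ and A_4^μ are Hermitian and A_3^μ(l_μ + n_μ) = diag(1,3,2,2,3,1) and A_4^μ(l_μ + n_μ) = diag(1,2,2,2,1) are positive definite. -/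

import Mathlib

noncomputable section

open Matrix

open scoped ComplexOrder

/-! The principal symbol matrices of the reduced evolution system extracted from the
conformal Einstein field equations in Stewart's gauge, at a point where the frame
components take the values `Q` (real), `C^A` (real) and `P^A` (complex).  The NP frame
is `l = ∂_v + C^A∂_A`, `n = Q∂_u`, `m = P^A∂_A`, and the covector `l_μ + n_μ` has
components `(1, 1/Q, 0, 0)` in the coordinates `(v, u, x^A)`. -/

/-- `A₃^v` for the system `D₃Φ = B₃Φ`. -/
def A3v : Matrix (Fin 6) (Fin 6) ℂ := diagonal ![0, 1, 1, 1, 2, 1]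

/-- `A₃^u`. -/
def A3u (Q : ℝ) : Matrix (Fin 6) (Fin 6) ℂ :=
  diagonal ![(Q : ℂ), 2 * Q, Q, Q, Q, 0]

/-- `A₃^{x^A}`. -/
def A3ang (C : Fin 2 → ℝ) (P : Fin 2 → ℂ) (A : Fin 2) : Matrix (Fin 6) (Fin 6) ℂ :=
  !![0, -(star (P A)), 0, 0, 0, 0;
     -(P A), (C A : ℂ), -(P A), -(star (P A)), 0, 0;
     0, -(star (P A)), (C A : ℂ), 0, -(star (P A)), 0;
     0, -(P A), 0, (C A : ℂ), -(P A), 0;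
     0, 0, -(P A), -(star (P A)), 2 * (C A : ℂ), -(P A);
     0, 0, 0, 0, -(star (P A)), (C A : ℂ)]

/-- `A₄^v` for the system `D₄φ = B₄φ`. -/
def A4v : Matrix (Fin 5) (Fin 5) ℂ := diagonal ![0, 1, 1, 1, 1]

/-- `A₄^u`. -/
def A4u (Q : ℝ) : Matrix (Fin 5) (Fin 5) ℂ := diagonal ![(Q : ℂ), Q, Q, Q, 0]

/-- `A₄^{x^A}`. -/
def A4ang (C : Fin 2 → ℝ) (P : Fin 2 → ℂ) (A : Fin 2) : Matrix (Fin 5) (Fin 5) ℂ :=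
  !![0, -(P A), 0, 0, 0;
     -(star (P A)), (C A : ℂ), -(P A), 0, 0;
     0, -(star (P A)), (C A : ℂ), -(P A), 0;
     0, 0, -(star (P A)), (C A : ℂ), -(P A);
     0, 0, 0, -(star (P A)), (C A : ℂ)]

/-- Principal symbols of the diagonal operators `D₀ = diag(Δ,…,Δ)` (5 components),
`D₁ = diag(Δ,Δ,D)` and `D₂ = diag(Δ×6, D×3)`: `v`-coefficient matrices. -/
def A0v : Matrix (Fin 5) (Fin 5) ℂ := diagonal ![0, 0, 0, 0, 0]
def A0u (Q : ℝ) : Matrix (Fin 5) (Fin 5) ℂ := diagonal ![(Q : ℂ), Q, Q, Q, Q]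
def A1v : Matrix (Fin 3) (Fin 3) ℂ := diagonal ![0, 0, 1]
def A1u (Q : ℝ) : Matrix (Fin 3) (Fin 3) ℂ := diagonal ![(Q : ℂ), Q, 0]
def A2v : Matrix (Fin 9) (Fin 9) ℂ := diagonal ![0, 0, 0, 0, 0, 0, 1, 1, 1]
def A2u (Q : ℝ) : Matrix (Fin 9) (Fin 9) ℂ :=
  diagonal ![(Q : ℂ), Q, Q, Q, Q, Q, 0, 0, 0]


@[simp] lemma Matrix.cons_val_five {α : Type*} {m : ℕ}
    (x : α) (u : Fin m.succ.succ.succ.succ.succ → α) :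
    Matrix.vecCons x u 5 =
      Matrix.vecHead (Matrix.vecTail (Matrix.vecTail (Matrix.vecTail (Matrix.vecTail u)))) :=
  rfl

/-- **Symmetric hyperbolicity of the reduced conformal evolution system.**
All the principal symbol matrices are Hermitian, and their contraction with the
covector `τ_μ = l_μ + n_μ = (1, 1/Q, 0, 0)` gives `diag(1,3,2,2,3,1)` for `D₃`,
`diag(1,2,2,2,1)` for `D₄` and the identity for `D₀, D₁, D₂`; these matrices are
positive definite.  Hence the system is symmetric hyperbolic with respect to
`τ^a = l^a + n^a`. -/
theorem reduced_system_symmetric_hyperbolic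
    (Q : ℝ) (hQ : 0 < Q) (C : Fin 2 → ℝ) (P : Fin 2 → ℂ) :
    -- all the principal symbol matrices are Hermitian
    (A3v.IsHermitian ∧ (A3u Q).IsHermitian ∧ (∀ A, (A3ang C P A).IsHermitian)) ∧
    (A4v.IsHermitian ∧ (A4u Q).IsHermitian ∧ (∀ A, (A4ang C P A).IsHermitian)) ∧
    (A0v.IsHermitian ∧ (A0u Q).IsHermitian ∧ A1v.IsHermitian ∧ (A1u Q).IsHermitian ∧
      A2v.IsHermitian ∧ (A2u Q).IsHermitian) ∧
    -- `A₃^μ (l_μ + n_μ) = diag(1,3,2,2,3,1)` is positive definite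
    (A3v + (Q⁻¹ : ℂ) • A3u Q = diagonal ![1, 3, 2, 2, 3, 1] ∧
      (diagonal ![1, 3, 2, 2, 3, 1] : Matrix (Fin 6) (Fin 6) ℂ).PosDef) ∧
    -- `A₄^μ (l_μ + n_μ) = diag(1,2,2,2,1)` is positive definite
    (A4v + (Q⁻¹ : ℂ) • A4u Q = diagonal ![1, 2, 2, 2, 1] ∧
      (diagonal ![1, 2, 2, 2, 1] : Matrix (Fin 5) (Fin 5) ℂ).PosDef) ∧
    -- the contractions for `D₀`, `D₁`, `D₂` are the identity, which is positive definite
    (A0v + (Q⁻¹ : ℂ) • A0u Q = 1 ∧ A1v + (Q⁻¹ : ℂ) • A1u Q = 1 ∧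
      A2v + (Q⁻¹ : ℂ) • A2u Q = 1 ∧
      (1 : Matrix (Fin 9) (Fin 9) ℂ).PosDef) := by
  have h : (Q : ℂ) ≠ 0 := by exact_mod_cast hQ.ne'
  have hdiag : ∀ (n : ℕ) (d : Fin n → ℂ), (∀ i, (d i).im = 0) →
      (diagonal d).IsHermitian := fun n d hd =>
    isHermitian_diagonal_of_self_adjoint _
      (funext fun i => Complex.ext (by simp) (by simp [hd i]))
  have hcontr : ∀ (n : ℕ) (d₁ d₂ e : Fin n → ℂ), (∀ i, d₁ i + Q⁻¹ * d₂ i = e i) →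
      diagonal d₁ + (Q⁻¹ : ℂ) • diagonal d₂ = diagonal e := by
    intro n d₁ d₂ e he
    rw [smul_eq_diagonal_mul, diagonal_mul_diagonal, diagonal_add,
      diagonal_eq_diagonal_iff]
    intro i
    simpa using he i
  refine ⟨⟨?_, ?_, ?_⟩, ⟨?_, ?_, ?_⟩, ⟨?_, ?_, ?_, ?_, ?_, ?_⟩, ⟨?_, ?_⟩, ⟨?_, ?_⟩,
    ?_, ?_, ?_, Matrix.PosDef.one⟩
  · exact hdiag _ _ fun i => by fin_cases i <;> norm_num
  · exact hdiag _ _ fun i => by fin_cases i <;> norm_num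
  · intro A
    ext i j
    fin_cases i <;> fin_cases j <;>
      simp [A3ang, conjTranspose_apply, Matrix.vecHead, Matrix.vecTail]
  · exact hdiag _ _ fun i => by fin_cases i <;> norm_num
  · exact hdiag _ _ fun i => by fin_cases i <;> norm_num
  · intro A
    ext i j
    fin_cases i <;> fin_cases j <;>
      simp [A4ang, conjTranspose_apply, Matrix.vecHead, Matrix.vecTail]
  · exact hdiag _ _ fun i => by fin_cases i <;> norm_num
  · exact hdiag _ _ fun i => by fin_cases i <;> norm_num
  · exact hdiag _ _ fun i => by fin_cases i <;> norm_num
  · exact hdiag _ _ fun i => by fin_cases i <;> norm_num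
  · exact hdiag _ _ fun i => by fin_cases i <;> norm_num
  · exact hdiag _ _ fun i => by fin_cases i <;> norm_num
  · exact hcontr _ _ _ _ fun i => by
      fin_cases i <;> norm_num [h] <;> field_simp <;> ring
  · exact Matrix.PosDef.diagonal fun i => by fin_cases i <;> norm_num
  · exact hcontr _ _ _ _ fun i => by
      fin_cases i <;> norm_num [h] <;> field_simp <;> ring
  · exact Matrix.PosDef.diagonal fun i => by fin_cases i <;> norm_num
  · rw [← diagonal_one]
    exact hcontr _ _ _ _ fun i => by fin_cases i <;> norm_num [h] <;> field_simp
  · rw [← diagonal_one]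
    exact hcontr _ _ _ _ fun i => by fin_cases i <;> norm_num [h] <;> field_simp
  · rw [← diagonal_one]
    exact hcontr _ _ _ _ fun i => by fin_cases i <;> norm_num [h] <;> field_simp
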